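/- The ring game G has no Nash equilibrium: for every joint strategy s there is a player whose strategy is not a best response to the strategies of the others. -/

import Mathlib

/-!
Game-theoretic formalization of Dijkstra's self-stabilization (Apt & Shoja).
Players are `Fin n`; a joint strategy is `s : Fin n → C`.
-/

/-- Payoff in the ring game `G` on the directed ring `0 → 1 → ⋯ → n-1 → 0`:
player `0` plays the anti-coordination game with respect to its predecessor
(player `n-1`, i.e. `0 - 1` in `Fin n`); every other player `i` plays the
coordination game with respect to its predecessor `i - 1`. -/
def ringPayoff {n : ℕ} [NeZero n] {C : Type*} [DecidableEq C]
    (s : Fin n → C) (i : Fin n) : ℕ :=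
  if i = 0 then (if s i = s (i - 1) then 0 else 1)
  else (if s i = s (i - 1) then 1 else 0)

/-- `s i` is a best response of player `i` to the strategies of the others in `s`. -/
def BestResponse {n : ℕ} {C : Type*}
    (p : (Fin n → C) → Fin n → ℕ) (s : Fin n → C) (i : Fin n) : Prop :=
  ∀ c : C, p (Function.update s i c) i ≤ p s i

/-- An improvement step from `s` to `s'` in which player `i` is selected:
only player `i` changes its strategy and its payoff strictly increases. -/
def StepAt {n : ℕ} {C : Type*}
    (p : (Fin n → C) → Fin n → ℕ) (i : Fin n) (s s' : Fin n → C) : Prop :=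
  (∀ j, j ≠ i → s' j = s j) ∧ p s i < p s' i

/-- A joint strategy is legitimate if exactly one player does not play a best response. -/
def Legitimate {n : ℕ} {C : Type*}
    (p : (Fin n → C) → Fin n → ℕ) (s : Fin n → C) : Prop :=
  ∃! i : Fin n, ¬ BestResponse p s i

/-- The ring game `G` (with `n ≥ 2` players and `|C| ≥ 2` colours)
has no Nash equilibrium: for every joint strategy `s` there is a player whose
strategy is not a best response to the strategies of the others. -/
theorem ring_game_no_nash_equilibrium
    (n : ℕ) [NeZero n] (hn : 2 ≤ n)
    (C : Type*) [Fintype C] [DecidableEq C] (hC : 2 ≤ Fintype.card C)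
    (s : Fin n → C) :
    ∃ i : Fin n, ¬ BestResponse (ringPayoff (n := n) (C := C)) s i := by
  by_contra hcon
  push_neg at hcon
  have hv1 : ((1 : Fin n) : ℕ) = 1 := by
    simp [Fin.val_one', Nat.mod_eq_of_lt (by omega : 1 < n)]
  have h1 : (1 : Fin n) ≠ 0 := by
    intro h; rw [h] at hv1; simp at hv1
  have hsub : ∀ i : Fin n, i - 1 ≠ i := by
    intro i h
    exact h1 (sub_eq_self.mp h)
  -- every player i ≠ 0 copies its predecessor
  have hcopy : ∀ i : Fin n, i ≠ 0 → s i = s (i - 1) := by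
    intro i hi
    have := hcon i (s (i - 1))
    by_contra hne
    rw [ringPayoff, ringPayoff] at this
    simp only [if_neg hi] at this
    rw [Function.update_self, Function.update_of_ne (hsub i)] at this
    simp [hne] at this
  -- hence s is constant
  have hconst : ∀ k : ℕ, (hk : k < n) → s ⟨k, hk⟩ = s 0 := by
    intro k
    induction k with
    | zero => intro hk; rfl
    | succ m ih =>
      intro hk
      have hm : m < n := by omega
      have hne : (⟨m + 1, hk⟩ : Fin n) ≠ 0 := by
        simp [Fin.ext_iff]
      have hpred : (⟨m + 1, hk⟩ : Fin n) - 1 = ⟨m, hm⟩ := by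
        apply Fin.ext
        rw [Fin.sub_def]
        simp only [hv1]
        have h2 : n - 1 + (m + 1) = n + m := by omega
        rw [h2, Nat.add_mod_left, Nat.mod_eq_of_lt hm]
      rw [hcopy _ hne, hpred, ih hm]
  have hlast : s (0 - 1) = s 0 := by
    have hk : n - 1 < n := by omega
    have : (0 : Fin n) - 1 = ⟨n - 1, hk⟩ := by
      apply Fin.ext
      rw [Fin.sub_def]
      simp only [hv1, Fin.val_zero, Nat.zero_add, Nat.add_zero]
      exact Nat.mod_eq_of_lt hk
    rw [this, hconst _ hk]
  -- player 0 can deviate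
  obtain ⟨c, hc⟩ := Fintype.exists_ne_of_one_lt_card (by omega) (s (0 - 1))
  have := hcon 0 c
  rw [ringPayoff, ringPayoff] at this
  simp only [if_pos rfl] at this
  rw [Function.update_self, Function.update_of_ne (hsub 0)] at this
  simp only [zero_sub, if_true] at this hlast hc
  rw [if_neg hc, if_pos hlast.symm] at this
  omega
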